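/- Let M, N be monomials and f a nonzero polynomial with leading coefficient 1. Then S(Nf, M) = (lcm(M, N·in(f))/in(f)) · (f − in(f)). Moreover, if gcd(M, in(f)) = 1, then S(Nf, M) is a polynomial multiple of M. -/

import Mathlib

open MvPolynomial

variable {σ k : Type*} [Field k]

/-- The exponent of the leading monomial of `f` with respect to the monomial order `m`. -/
noncomputable def mdeg (m : MonomialOrder σ) (f : MvPolynomial σ k) : σ →₀ ℕ :=
  m.toSyn.symm (f.support.sup fun a => m.toSyn a)

/-- The leading term `in(f)` of `f` with respect to the monomial order `m`. -/
noncomputable def ltm (m : MonomialOrder σ) (f : MvPolynomial σ k) : MvPolynomial σ k :=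
  monomial (mdeg m f) (f.coeff (mdeg m f))

/-- The S-resultant `S(f, g) = (lcm(in f, in g)/in f)·f − (lcm(in f, in g)/in g)·g`
of two polynomials whose leading coefficients are `1`:  the least common multiple of the
two leading monomials has exponent `mdeg f ⊔ mdeg g`. -/
noncomputable def Sres (m : MonomialOrder σ) (f g : MvPolynomial σ k) :
    MvPolynomial σ k :=
  monomial (mdeg m f ⊔ mdeg m g - mdeg m f) (1 : k) * f
    - monomial (mdeg m f ⊔ mdeg m g - mdeg m g) (1 : k) * g

lemma mdeg_monomial (m : MonomialOrder σ) (a : σ →₀ ℕ) :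
    mdeg m (monomial a (1 : k)) = a := by
  classical
  rw [mdeg, support_monomial, if_neg one_ne_zero, Finset.sup_singleton]
  simp

lemma mdeg_monomial_mul (m : MonomialOrder σ) (b : σ →₀ ℕ) {f : MvPolynomial σ k}
    (hf : f ≠ 0) : mdeg m (monomial b (1 : k) * f) = b + mdeg m f := by
  have hsupp : (monomial b (1 : k) * f).support =
      f.support.map (addLeftEmbedding b) :=
    AddMonoidAlgebra.support_coeff_single_mul f 1 (by simp) b
  have hne : f.support.Nonempty := support_nonempty.mpr hf
  have hne' : (f.support.map (addLeftEmbedding b)).Nonempty := hne.map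
  unfold mdeg
  rw [hsupp, ← Finset.sup'_eq_sup hne', ← Finset.sup'_eq_sup hne, Finset.sup'_map]
  have hmono : Monotone (fun x => m.toSyn b + x) := fun x y h => add_le_add_right h _
  have := Finset.comp_sup'_eq_sup'_comp (f := fun d => m.toSyn d)
      hne (fun x => m.toSyn b + x) (fun x y => hmono.map_sup x y)
  rw [show ((fun a => m.toSyn a) ∘ (addLeftEmbedding b))
      = fun d => m.toSyn b + m.toSyn d from
    funext fun d => by simp [addLeftEmbedding, map_add]]
  simp only [Function.comp] at this
  rw [Finset.sup'_congr hne rfl (fun d _ => rfl), ← this, map_add]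
  simp

/-- Let `M = x^a`, `N = x^b` be monomials and `f` a nonzero polynomial
with leading coefficient 1.  Then `S(Nf, M) = (lcm(M, N·in(f))/in(f)) · (f − in(f))`.
Moreover, if `gcd(M, in(f)) = 1` (i.e. the supports of the exponents are disjoint), then
`S(Nf, M)` is a polynomial multiple of `M`. -/
theorem stmt4 (m : MonomialOrder σ)
    (a b : σ →₀ ℕ) (f : MvPolynomial σ k)
    (hf : f ≠ 0) (hlc : f.coeff (mdeg m f) = 1) :
    Sres m (monomial b (1 : k) * f) (monomial a (1 : k))
        = monomial (a ⊔ (b + mdeg m f) - mdeg m f) (1 : k) * (f - ltm m f) ∧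
      (Disjoint a.support (mdeg m f).support →
        (monomial a (1 : k)) ∣ Sres m (monomial b (1 : k) * f) (monomial a (1 : k))) := by
  set D := mdeg m f with hD
  have hd1 : mdeg m (monomial b (1 : k) * f) = b + D := mdeg_monomial_mul m b hf
  have hd2 : mdeg m (monomial a (1 : k)) = a := mdeg_monomial m a
  set e : σ →₀ ℕ := a ⊔ (b + D) - D with he
  have claim1 : ((b + D) ⊔ a - (b + D)) + b = e := by
    ext i
    simp only [Finsupp.coe_tsub, Finsupp.coe_add, Pi.add_apply, Pi.sub_apply,
      Finsupp.sup_apply, he]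
    omega
  have claim2 : ((b + D) ⊔ a - a) + a = a ⊔ (b + D) := by
    ext i
    simp only [Finsupp.coe_tsub, Finsupp.coe_add, Pi.add_apply, Pi.sub_apply,
      Finsupp.sup_apply]
    omega
  have claim3 : e + D = a ⊔ (b + D) := by
    ext i
    simp only [Finsupp.coe_tsub, Finsupp.coe_add, Pi.add_apply, Pi.sub_apply,
      Finsupp.sup_apply, he]
    omega
  have hmain : Sres m (monomial b (1 : k) * f) (monomial a (1 : k))
      = monomial e (1 : k) * (f - ltm m f) := by
    rw [Sres, hd1, hd2, ltm, ← hD, hlc, mul_sub, ← mul_assoc, monomial_mul, monomial_mul,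
      monomial_mul, one_mul, claim1, claim2, claim3]
  refine ⟨hmain, fun hdisj => ?_⟩
  have hle : a ≤ e := by
    intro i
    have h0 : a i = 0 ∨ D i = 0 := by
      by_cases h : a i = 0
      · exact Or.inl h
      · exact Or.inr (by
          have : i ∉ D.support := Finset.disjoint_left.mp hdisj
            (Finsupp.mem_support_iff.mpr h)
          simpa [Finsupp.mem_support_iff] using this)
    simp only [he, Finsupp.coe_tsub, Pi.sub_apply, Finsupp.sup_apply, Finsupp.coe_add,
      Pi.add_apply]
    omega
  refine ⟨monomial (e - a) (1 : k) * (f - ltm m f), ?_⟩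
  rw [hmain, ← mul_assoc, monomial_mul, one_mul,
    add_tsub_cancel_of_le hle]
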